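/- For n ≥ 2, M(n, I_2) = n² − n, and the unique n×n strongly I_2-forcing (0,1)-matrix with n² − n 1-entries is J_n − H_n. -/

import Mathlib

open Finset

/-- Number of 1-entries of a (0,1)-matrix. -/
def onesCount {m n : ℕ} (A : Fin m → Fin n → Bool) : ℕ :=
  (Finset.univ.filter (fun p : Fin m × Fin n => A p.1 p.2 = true)).card

/-- Number of 0-entries of a (0,1)-matrix. -/
def zerosCount {m n : ℕ} (A : Fin m → Fin n → Bool) : ℕ :=
  (Finset.univ.filter (fun p : Fin m × Fin n => A p.1 p.2 = false)).card

/-- `A` is `Q`-forcing: every s×t submatrix of `A` is entrywise ≥ Q. -/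
def IsForcing {m n s t : ℕ} (A : Fin m → Fin n → Bool) (Q : Fin s → Fin t → Bool) : Prop :=
  ∀ (r : Fin s → Fin m) (c : Fin t → Fin n), StrictMono r → StrictMono c →
    ∀ y x, Q y x = true → A (r y) (c x) = true

/-- Minimum number of 1-entries of an m×n Q-forcing matrix. -/
noncomputable def mMin (m n : ℕ) {s t : ℕ} (Q : Fin s → Fin t → Bool) : ℕ :=
  sInf {v | ∃ A : Fin m → Fin n → Bool, IsForcing A Q ∧ onesCount A = v}

/-- `A` is strongly `Q`-forcing: every 1-entry lies in a submatrix exactly equal to `Q`. -/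
def IsStronglyForcing {m n s t : ℕ} (A : Fin m → Fin n → Bool)
    (Q : Fin s → Fin t → Bool) : Prop :=
  ∀ i j, A i j = true → ∃ (r : Fin s → Fin m) (c : Fin t → Fin n),
    StrictMono r ∧ StrictMono c ∧ (∀ y x, A (r y) (c x) = Q y x) ∧
    ∃ y x, r y = i ∧ c x = j

/-- Maximum number of 1-entries of an m×n strongly Q-forcing matrix. -/
noncomputable def MMax (m n : ℕ) {s t : ℕ} (Q : Fin s → Fin t → Bool) : ℕ :=
  sSup {v | ∃ A : Fin m → Fin n → Bool, IsStronglyForcing A Q ∧ onesCount A = v}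

/-- Corner sets of 0-positions with no 1-entry weakly in the given quadrant direction. -/
def cornerNW {s t : ℕ} (Q : Fin s → Fin t → Bool) : Finset (Fin s × Fin t) :=
  Finset.univ.filter (fun p => ∀ i' j', i' ≤ p.1 → j' ≤ p.2 → Q i' j' = false)

def cornerNE {s t : ℕ} (Q : Fin s → Fin t → Bool) : Finset (Fin s × Fin t) :=
  Finset.univ.filter (fun p => ∀ i' j', i' ≤ p.1 → p.2 ≤ j' → Q i' j' = false)

def cornerSW {s t : ℕ} (Q : Fin s → Fin t → Bool) : Finset (Fin s × Fin t) :=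
  Finset.univ.filter (fun p => ∀ i' j', p.1 ≤ i' → j' ≤ p.2 → Q i' j' = false)

def cornerSE {s t : ℕ} (Q : Fin s → Fin t → Bool) : Finset (Fin s × Fin t) :=
  Finset.univ.filter (fun p => ∀ i' j', p.1 ≤ i' → p.2 ≤ j' → Q i' j' = false)

/-- `P` is a permutation matrix. -/
def IsPermMatrix {k : ℕ} (P : Fin k → Fin k → Bool) : Prop :=
  ∃ σ : Equiv.Perm (Fin k), ∀ i j, P i j = decide (σ i = j)

lemma strictMono_fin2 {n : ℕ} {r : Fin 2 → Fin n} (h : r 0 < r 1) : StrictMono r := by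
  intro a b hab
  fin_cases a <;> fin_cases b <;> simp_all

lemma ones_add_zeros {m n : ℕ} (A : Fin m → Fin n → Bool) :
    onesCount A + zerosCount A = m * n := by
  classical
  have hzz : zerosCount A
      = (Finset.univ.filter (fun p : Fin m × Fin n => ¬ A p.1 p.2 = true)).card := by
    unfold zerosCount; congr 1; apply Finset.filter_congr; intro p _; simp
  rw [onesCount, hzz, Finset.card_filter_add_card_filter_not]
  simp [Finset.card_univ]

lemma forcing_struct {n : ℕ} {A : Fin n → Fin n → Bool}
    (h : IsStronglyForcing A (fun (i j : Fin 2) => decide (i = j)))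
    {i j : Fin n} (hij : A i j = true) :
    (∃ i' j', i < i' ∧ j < j' ∧ A i j' = false ∧ A i' j = false ∧ A i' j' = true) ∨
    (∃ i' j', i' < i ∧ j' < j ∧ A i j' = false ∧ A i' j = false ∧ A i' j' = true) := by
  obtain ⟨r, c, hr, hc, hA, y, x, hy, hx⟩ := h i j hij
  have hq : y = x := by
    have h2 := hA y x
    rw [hy, hx, hij] at h2
    exact of_decide_eq_true h2.symm
  subst hq
  subst hy; subst hx
  have h01 : (0 : Fin 2) < 1 := by decide
  fin_cases y
  · left
    exact ⟨r 1, c 1, hr h01, hc h01, by simpa using hA 0 1, by simpa using hA 1 0,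
      by simpa using hA 1 1⟩
  · right
    exact ⟨r 0, c 0, hr h01, hc h01, by simpa using hA 1 0, by simpa using hA 0 1,
      by simpa using hA 0 0⟩

lemma row_zero {n : ℕ} {A : Fin n → Fin n → Bool}
    (h : IsStronglyForcing A (fun (i j : Fin 2) => decide (i = j))) (hn : 0 < n) (i : Fin n) :
    ∃ j, A i j = false := by
  by_cases h0 : A i ⟨0, hn⟩ = true
  · rcases forcing_struct h h0 with ⟨i', j', _, _, hz, _, _⟩ | ⟨i', j', _, _, hz, _, _⟩ <;>
      exact ⟨j', hz⟩
  · exact ⟨⟨0, hn⟩, by simpa using h0⟩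

lemma col_zero {n : ℕ} {A : Fin n → Fin n → Bool}
    (h : IsStronglyForcing A (fun (i j : Fin 2) => decide (i = j))) (hn : 0 < n) (j : Fin n) :
    ∃ i, A i j = false := by
  by_cases h0 : A ⟨0, hn⟩ j = true
  · rcases forcing_struct h h0 with ⟨i', j', _, _, _, hz, _⟩ | ⟨i', j', _, _, _, hz, _⟩ <;>
      exact ⟨i', hz⟩
  · exact ⟨⟨0, hn⟩, by simpa using h0⟩

lemma zeros_ge {n : ℕ} {A : Fin n → Fin n → Bool}
    (hrz : ∀ i : Fin n, ∃ j, A i j = false) : n ≤ zerosCount A := by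
  classical
  choose z hz using hrz
  have h1 : (Finset.univ : Finset (Fin n)).card
      ≤ (Finset.univ.filter (fun p : Fin n × Fin n => A p.1 p.2 = false)).card := by
    apply Finset.card_le_card_of_injOn (fun i => (i, z i))
    · intro a _; simp [hz a]
    · intro a _ b _ hab; exact congrArg Prod.fst hab
  simpa [zerosCount] using h1

lemma ones_le {n : ℕ} {A : Fin n → Fin n → Bool} (hn : 0 < n)
    (h : IsStronglyForcing A (fun (i j : Fin 2) => decide (i = j))) :
    onesCount A ≤ n ^ 2 - n := by
  have h1 := ones_add_zeros A
  have h2 := zeros_ge (row_zero h hn)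
  have h3 : n ^ 2 = n * n := sq n
  omega

lemma zero_pattern {n : ℕ} (hn : 2 ≤ n) {A : Fin n → Fin n → Bool}
    (h : IsStronglyForcing A (fun (i j : Fin 2) => decide (i = j)))
    (hc : onesCount A = n ^ 2 - n) :
    ∀ i j : Fin n, (A i j = false ↔ (i : ℕ) + (j : ℕ) = n - 1) := by
  classical
  have hn0 : 0 < n := by omega
  have htot := ones_add_zeros A
  have hsq : n ^ 2 = n * n := sq n
  have hzc : zerosCount A = n := by
    have := zeros_ge (row_zero h hn0)
    have hmul : n ≤ n * n := Nat.le_mul_of_pos_left n hn0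
    omega
  set Z := (Finset.univ.filter (fun p : Fin n × Fin n => A p.1 p.2 = false)) with hZ
  have hZcard : Z.card = n := hzc
  -- each row has exactly one zero
  have himg1 : Z.image Prod.fst = Finset.univ := by
    apply Finset.eq_univ_of_forall
    intro i
    obtain ⟨j, hj⟩ := row_zero h hn0 i
    exact Finset.mem_image.mpr ⟨(i, j), by simp [hZ, hj], rfl⟩
  have hinj1 : Set.InjOn Prod.fst (Z : Set (Fin n × Fin n)) := by
    rw [← Finset.card_image_iff]
    rw [himg1, hZcard]; simp
  have himg2 : Z.image Prod.snd = Finset.univ := by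
    apply Finset.eq_univ_of_forall
    intro j
    obtain ⟨i, hi⟩ := col_zero h hn0 j
    exact Finset.mem_image.mpr ⟨(i, j), by simp [hZ, hi], rfl⟩
  have hinj2 : Set.InjOn Prod.snd (Z : Set (Fin n × Fin n)) := by
    rw [← Finset.card_image_iff]
    rw [himg2, hZcard]; simp
  have memZ : ∀ {i j : Fin n}, A i j = false → ((i, j) : Fin n × Fin n) ∈ Z := by
    intro i j hij; simp [hZ, hij]
  have rowuniq : ∀ {i j j' : Fin n}, A i j = false → A i j' = false → j = j' := by
    intro i j j' h1 h2
    have h3 : ((i, j) : Fin n × Fin n) = (i, j') :=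
      hinj1 (Finset.mem_coe.mpr (memZ h1)) (Finset.mem_coe.mpr (memZ h2)) rfl
    exact congrArg Prod.snd h3
  have coluniq : ∀ {i i' j : Fin n}, A i j = false → A i' j = false → i = i' := by
    intro i i' j h1 h2
    have h3 : ((i, j) : Fin n × Fin n) = (i', j) :=
      hinj2 (Finset.mem_coe.mpr (memZ h1)) (Finset.mem_coe.mpr (memZ h2)) rfl
    exact congrArg Prod.fst h3
  choose z hz using row_zero h hn0
  have zero_iff : ∀ i j : Fin n, A i j = false ↔ j = z i := by
    intro i j
    exact ⟨fun hf => rowuniq hf (hz i), fun e => e ▸ hz i⟩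
  have zinj : Function.Injective z := by
    intro a b hab
    exact coluniq (hz a) (hab ▸ hz b)
  have hanti : StrictAnti z := by
    have key : ∀ i k : Fin n, i < k → z k < z i := by
      intro i k hik
      have hne : z k ≠ z i := fun e => (ne_of_lt hik) (zinj e).symm
      have hA1 : A i (z k) = true := by
        rcases Bool.eq_false_or_eq_true (A i (z k)) with hf | ht
        · exact hf
        · exact absurd ((zero_iff i (z k)).mp ht) hne
      rcases forcing_struct h hA1 with ⟨i', j', hii', hjj', hz1, hz2, _⟩ |
        ⟨i', j', hi'i, hj'j, hz1, hz2, _⟩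
      · have : j' = z i := (zero_iff i j').mp hz1
        exact this ▸ hjj'
      · have : i' = k := coluniq hz2 (hz k)
        exact absurd (this ▸ hi'i) (asymm hik)
    exact fun a b hab => key a b hab
  have hmono : StrictMono (fun i : Fin n => z (Fin.rev i)) := by
    intro a b hab
    exact hanti (Fin.rev_lt_rev.mpr hab)
  haveI : WellFoundedLT (Fin n) := Finite.to_wellFoundedLT
  have hid : (fun i : Fin n => z (Fin.rev i)) = id := by
    rw [← (hmono.range_inj strictMono_id)]
    rw [Set.range_id]
    apply Set.range_eq_univ.mpr
    exact Finite.injective_iff_surjective.mp hmono.injective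
  have hzrev : ∀ i : Fin n, z i = Fin.rev i := by
    intro i
    have := congrFun hid (Fin.rev i)
    simpa [Fin.rev_rev] using this
  intro i j
  rw [zero_iff i j, hzrev i]
  rw [Fin.ext_iff, Fin.val_rev]
  have := i.isLt; have := j.isLt
  omega

lemma B_forcing {n : ℕ} (hn : 2 ≤ n) :
    IsStronglyForcing (fun (i j : Fin n) => decide ((i : ℕ) + (j : ℕ) ≠ n - 1))
      (fun (i j : Fin 2) => decide (i = j)) := by
  intro i j hij
  have hij' : (i : ℕ) + (j : ℕ) ≠ n - 1 := of_decide_eq_true hij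
  have hi := i.isLt
  have hj := j.isLt
  rcases lt_or_gt_of_ne hij' with hlt | hgt
  · refine ⟨![i, Fin.rev j], ![j, Fin.rev i], strictMono_fin2 ?_, strictMono_fin2 ?_, ?_,
      0, 0, rfl, rfl⟩
    · show i < Fin.rev j
      rw [Fin.lt_def, Fin.val_rev]; omega
    · show j < Fin.rev i
      rw [Fin.lt_def, Fin.val_rev]; omega
    · intro y x
      fin_cases y <;> fin_cases x <;>
        simp [Fin.val_rev, decide_eq_decide] <;> grind
  · refine ⟨![Fin.rev j, i], ![Fin.rev i, j], strictMono_fin2 ?_, strictMono_fin2 ?_, ?_,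
      1, 1, rfl, rfl⟩
    · show Fin.rev j < i
      rw [Fin.lt_def, Fin.val_rev]; omega
    · show Fin.rev i < j
      rw [Fin.lt_def, Fin.val_rev]; omega
    · intro y x
      fin_cases y <;> fin_cases x <;>
        simp [Fin.val_rev, decide_eq_decide] <;> grind

lemma B_ones {n : ℕ} (hn : 0 < n) :
    onesCount (fun (i j : Fin n) => decide ((i : ℕ) + (j : ℕ) ≠ n - 1)) = n ^ 2 - n := by
  classical
  have hz : zerosCount (fun (i j : Fin n) => decide ((i : ℕ) + (j : ℕ) ≠ n - 1)) = n := by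
    unfold zerosCount
    have hset : (Finset.univ.filter
        (fun p : Fin n × Fin n => (decide ((p.1 : ℕ) + (p.2 : ℕ) ≠ n - 1) : Bool) = false))
        = Finset.univ.image (fun i : Fin n => (i, Fin.rev i)) := by
      ext ⟨a, b⟩
      simp only [Finset.mem_filter, Finset.mem_univ, true_and, Finset.mem_image,
        decide_eq_false_iff_not, not_not]
      constructor
      · intro hab
        refine ⟨a, Prod.ext rfl ?_⟩
        have h1 := a.isLt; have h2 := b.isLt
        show Fin.rev a = b
        rw [Fin.ext_iff, Fin.val_rev]
        omega
      · rintro ⟨x, hx⟩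
        injection hx with h1 h2
        subst h1
        have hlt := b.isLt
        show (x : ℕ) + (b : ℕ) = n - 1
        rw [← h2, Fin.val_rev]
        have hlt2 := x.isLt
        omega
    rw [hset, Finset.card_image_of_injective _ (fun x y hxy => congrArg Prod.fst hxy),
      Finset.card_univ, Fintype.card_fin]
  have htot := ones_add_zeros (fun (i j : Fin n) => decide ((i : ℕ) + (j : ℕ) ≠ n - 1))
  have hsq : n ^ 2 = n * n := sq n
  have hmul : n ≤ n * n := Nat.le_mul_of_pos_left n hn
  omega

theorem stmt13 (n : ℕ) (hn : 2 ≤ n) :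
    MMax n n (fun (i j : Fin 2) => decide (i = j)) = n ^ 2 - n ∧
    ∀ A : Fin n → Fin n → Bool,
      IsStronglyForcing A (fun (i j : Fin 2) => decide (i = j)) →
      onesCount A = n ^ 2 - n →
      A = fun (i j : Fin n) => decide ((i : ℕ) + (j : ℕ) ≠ n - 1) := by
  have hn0 : 0 < n := by omega
  have hmem : n ^ 2 - n ∈ {v | ∃ A : Fin n → Fin n → Bool,
      IsStronglyForcing A (fun (i j : Fin 2) => decide (i = j)) ∧ onesCount A = v} :=
    ⟨_, B_forcing hn, B_ones hn0⟩
  have hub : ∀ v ∈ {v | ∃ A : Fin n → Fin n → Bool,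
      IsStronglyForcing A (fun (i j : Fin 2) => decide (i = j)) ∧ onesCount A = v},
      v ≤ n ^ 2 - n := by
    rintro v ⟨A, hA, rfl⟩
    exact ones_le hn0 hA
  constructor
  · unfold MMax
    exact le_antisymm (csSup_le ⟨_, hmem⟩ hub) (le_csSup ⟨n ^ 2 - n, hub⟩ hmem)
  · intro A hA hc
    funext i j
    have hp := zero_pattern hn hA hc i j
    cases hAij : A i j with
    | false =>
      have h1 := hp.mp hAij
      simp [h1]
    | true =>
      have hne : (i : ℕ) + (j : ℕ) ≠ n - 1 := fun e => by
        rw [hp.mpr e] at hAij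
        exact Bool.false_ne_true hAij
      simp [hne]
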